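/- If T is a theory containing HA that is closed under the rule Σ_{k+1}-DNE-R (from T ⊢ ¬¬φ infer T ⊢ φ for φ ∈ Σ_{k+1}), then T proves Σ_k-LEM. -/

import Mathlib

namespace SemiClassicalArith

/-- Terms of arithmetic: variables (de Bruijn indices) and function symbols
(one symbol of each arity for every code, covering all primitive recursive functions). -/
inductive Term : Type
  | var : ℕ → Term
  | func : (code : ℕ) → (arity : ℕ) → (Fin arity → Term) → Term

namespace Term

/-- Shift all variables `≥ d` up by one. -/
def lift (d : ℕ) : Term → Term
  | var n => if n < d then var n else var (n + 1)
  | func c a ts => func c a fun i => (ts i).lift d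

/-- Binder-removing substitution of `s` for variable `k`. -/
def subst (k : ℕ) (s : Term) : Term → Term
  | var n => if n < k then var n else if n = k then s else var (n - 1)
  | func c a ts => func c a fun i => Term.subst k s (ts i)

/-- In-place replacement of variable `k` by `s` (no shifting of other variables). -/
def repl (k : ℕ) (s : Term) : Term → Term
  | var n => if n = k then s else var n
  | func c a ts => func c a fun i => Term.repl k s (ts i)

/-- Free variables of a term. -/
def fv : Term → Finset ℕ
  | var n => {n}
  | func _ _ ts => Finset.univ.sup fun i => (ts i).fv

/-- The constant zero (function symbol of arity 0, code 0). -/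
def zero : Term := func 0 0 (fun i => i.elim0)

/-- Successor (function symbol of arity 1, code 1). -/
def succ (t : Term) : Term := func 1 1 (fun _ => t)

end Term

/-- Formulas of arithmetic in the language with an extra nullary predicate
symbol `$` (`dollar`), used as a place holder. Quantifiers use de Bruijn indices. -/
inductive Formula : Type
  | falsum : Formula
  | dollar : Formula
  | eq : Term → Term → Formula
  | and : Formula → Formula → Formula
  | or : Formula → Formula → Formula
  | imp : Formula → Formula → Formula
  | all : Formula → Formula
  | ex : Formula → Formula

namespace Formula

def neg (φ : Formula) : Formula := φ.imp falsum

def iff (φ ψ : Formula) : Formula := (φ.imp ψ).and (ψ.imp φ)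

/-- `¬_$ φ`, i.e. `φ → $`. -/
def negD (φ : Formula) : Formula := φ.imp dollar

def lift (d : ℕ) : Formula → Formula
  | falsum => falsum
  | dollar => dollar
  | eq t u => eq (t.lift d) (u.lift d)
  | and φ ψ => and (φ.lift d) (ψ.lift d)
  | or φ ψ => or (φ.lift d) (ψ.lift d)
  | imp φ ψ => imp (φ.lift d) (ψ.lift d)
  | all φ => all (φ.lift (d + 1))
  | ex φ => ex (φ.lift (d + 1))

/-- Binder-removing substitution of term `s` for variable `k`. -/
def subst (k : ℕ) (s : Term) : Formula → Formula
  | falsum => falsum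
  | dollar => dollar
  | eq t u => eq (Term.subst k s t) (Term.subst k s u)
  | and φ ψ => and (Formula.subst k s φ) (Formula.subst k s ψ)
  | or φ ψ => or (Formula.subst k s φ) (Formula.subst k s ψ)
  | imp φ ψ => imp (Formula.subst k s φ) (Formula.subst k s ψ)
  | all φ => all (Formula.subst (k + 1) (s.lift 0) φ)
  | ex φ => ex (Formula.subst (k + 1) (s.lift 0) φ)

/-- In-place replacement of variable `k` by term `s`. -/
def repl (k : ℕ) (s : Term) : Formula → Formula
  | falsum => falsum
  | dollar => dollar
  | eq t u => eq (Term.repl k s t) (Term.repl k s u)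
  | and φ ψ => and (Formula.repl k s φ) (Formula.repl k s ψ)
  | or φ ψ => or (Formula.repl k s φ) (Formula.repl k s ψ)
  | imp φ ψ => imp (Formula.repl k s φ) (Formula.repl k s ψ)
  | all φ => all (Formula.repl (k + 1) (s.lift 0) φ)
  | ex φ => ex (Formula.repl (k + 1) (s.lift 0) φ)

/-- Free variables of a formula. -/
def fv : Formula → Finset ℕ
  | falsum => ∅
  | dollar => ∅
  | eq t u => t.fv ∪ u.fv
  | and φ ψ => φ.fv ∪ ψ.fv
  | or φ ψ => φ.fv ∪ ψ.fv
  | imp φ ψ => φ.fv ∪ ψ.fv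
  | all φ => (φ.fv.erase 0).image (· - 1)
  | ex φ => (φ.fv.erase 0).image (· - 1)

/-- A sentence is a formula with no free variables. -/
def sentence (φ : Formula) : Prop := φ.fv = ∅

/-- The formula is in the language of `HA` (the placeholder `$` does not occur). -/
def noDollar : Formula → Prop
  | falsum => True
  | dollar => False
  | eq _ _ => True
  | and φ ψ => φ.noDollar ∧ ψ.noDollar
  | or φ ψ => φ.noDollar ∧ ψ.noDollar
  | imp φ ψ => φ.noDollar ∧ ψ.noDollar
  | all φ => φ.noDollar
  | ex φ => φ.noDollar

/-- Quantifier-free formula of `HA`. -/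
def isQF : Formula → Prop
  | falsum => True
  | dollar => False
  | eq _ _ => True
  | and φ ψ => φ.isQF ∧ ψ.isQF
  | or φ ψ => φ.isQF ∧ ψ.isQF
  | imp φ ψ => φ.isQF ∧ ψ.isQF
  | all _ => False
  | ex _ => False

/-- Flip `+`/`-` in an alternation path (`true` = `+`, `false` = `-`). -/
def pflip (s : List Bool) : List Bool := s.map (!·)

/-- The set of alternation paths of a formula (Akama–Berardi–Hayashi–Kohlenbach). -/
def alt : Formula → Finset (List Bool)
  | falsum => {([] : List Bool)}
  | dollar => {([] : List Bool)}
  | eq _ _ => {([] : List Bool)}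
  | and φ ψ => φ.alt ∪ ψ.alt
  | or φ ψ => φ.alt ∪ ψ.alt
  | imp φ ψ => φ.alt.image pflip ∪ ψ.alt
  | all φ => φ.alt.image (fun s => if s.head? = some false then s else false :: s)
  | ex φ => φ.alt.image (fun s => if s.head? = some true then s else true :: s)

/-- The degree of a formula: the maximal length of its alternation paths. -/
def degree (φ : Formula) : ℕ := φ.alt.sup List.length

/-- The class `U_k` (for `k ≥ 1`: degree `k` and all maximal paths begin with `-`;
`U_0` is the class of degree-`0` formulas). -/
def inU (k : ℕ) (φ : Formula) : Prop :=
  φ.degree = k ∧ ∀ s ∈ φ.alt, s.length = k → k = 0 ∨ s.head? = some false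

/-- The class `E_k` (for `k ≥ 1`: degree `k` and all maximal paths begin with `+`;
`E_0` is the class of degree-`0` formulas). -/
def inE (k : ℕ) (φ : Formula) : Prop :=
  φ.degree = k ∧ ∀ s ∈ φ.alt, s.length = k → k = 0 ∨ s.head? = some true

/-- The dual of a prenex formula: swap quantifiers and negate the matrix. -/
def dual : Formula → Formula
  | all φ => ex φ.dual
  | ex φ => all φ.dual
  | φ => φ.neg

/-- The `$`-translation (Ishihara's generalized negative translation). -/
def dollarTr : Formula → Formula
  | falsum => dollar
  | dollar => dollar
  | eq t u => (eq t u).negD.negD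
  | and φ ψ => and φ.dollarTr ψ.dollarTr
  | or φ ψ => (or φ.dollarTr ψ.dollarTr).negD.negD
  | imp φ ψ => imp φ.dollarTr ψ.dollarTr
  | all φ => all φ.dollarTr
  | ex φ => (ex φ.dollarTr).negD.negD

/-- The Friedman A-translation: replace every prime formula `P` (including `⊥`)
by `P ∨ *` (here `*` is the placeholder `dollar`). -/
def aTr : Formula → Formula
  | falsum => or falsum dollar
  | dollar => dollar
  | eq t u => or (eq t u) dollar
  | and φ ψ => and φ.aTr ψ.aTr
  | or φ ψ => or φ.aTr ψ.aTr
  | imp φ ψ => imp φ.aTr ψ.aTr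
  | all φ => all φ.aTr
  | ex φ => ex φ.aTr

/-- Prefix `n` universal quantifiers. -/
def allN : Formula → ℕ → Formula
  | φ, 0 => φ
  | φ, n + 1 => Formula.allN φ.all n

/-- The universal closure of a formula. -/
def univClosure (φ : Formula) : Formula := φ.allN (φ.fv.sup Nat.succ)

end Formula

mutual
  /-- The class `Σ_k` of prenex formulas. -/
  inductive IsSigma : ℕ → Formula → Prop
    | qf {φ : Formula} : φ.isQF → IsSigma 0 φ
    | ofPi {k : ℕ} {φ : Formula} : IsPi k φ → IsSigma (k + 1) φ
    | ex {k : ℕ} {φ : Formula} : IsSigma (k + 1) φ → IsSigma (k + 1) φ.ex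
  /-- The class `Π_k` of prenex formulas. -/
  inductive IsPi : ℕ → Formula → Prop
    | qf {φ : Formula} : φ.isQF → IsPi 0 φ
    | ofSigma {k : ℕ} {φ : Formula} : IsSigma k φ → IsPi (k + 1) φ
    | all {k : ℕ} {φ : Formula} : IsPi (k + 1) φ → IsPi (k + 1) φ.all
end

/-- Axioms of Heyting arithmetic `HA` (Hilbert style intuitionistic predicate logic
with equality, plus arithmetical axioms and the induction scheme). -/
inductive HAAx : Formula → Prop
  | axK (φ ψ : Formula) : HAAx (φ.imp (ψ.imp φ))
  | axS (φ ψ χ : Formula) : HAAx ((φ.imp (ψ.imp χ)).imp ((φ.imp ψ).imp (φ.imp χ)))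
  | andI (φ ψ : Formula) : HAAx (φ.imp (ψ.imp (φ.and ψ)))
  | andE1 (φ ψ : Formula) : HAAx ((φ.and ψ).imp φ)
  | andE2 (φ ψ : Formula) : HAAx ((φ.and ψ).imp ψ)
  | orI1 (φ ψ : Formula) : HAAx (φ.imp (φ.or ψ))
  | orI2 (φ ψ : Formula) : HAAx (ψ.imp (φ.or ψ))
  | orE (φ ψ χ : Formula) : HAAx ((φ.imp χ).imp ((ψ.imp χ).imp ((φ.or ψ).imp χ)))
  | efq (φ : Formula) : HAAx (Formula.falsum.imp φ)
  | allE (φ : Formula) (t : Term) : HAAx (φ.all.imp (φ.subst 0 t))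
  | exI (φ : Formula) (t : Term) : HAAx ((φ.subst 0 t).imp φ.ex)
  | allK (φ ψ : Formula) : HAAx ((φ.imp ψ).all.imp (φ.all.imp ψ.all))
  | allVac (φ : Formula) : HAAx (φ.imp (φ.lift 0).all)
  | exE (φ ψ : Formula) : HAAx ((φ.imp (ψ.lift 0)).all.imp (φ.ex.imp ψ))
  | eqRefl (t : Term) : HAAx (Formula.eq t t)
  | eqSubst (t u : Term) (φ : Formula) : HAAx ((Formula.eq t u).imp ((φ.subst 0 t).imp (φ.subst 0 u)))
  | succNeZero (t : Term) : HAAx (Formula.neg (Formula.eq (Term.succ t) Term.zero))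
  | succInj (t u : Term) : HAAx ((Formula.eq (Term.succ t) (Term.succ u)).imp (Formula.eq t u))
  | ind (φ : Formula) : HAAx ((φ.subst 0 Term.zero).imp
      ((((φ.imp (φ.repl 0 (Term.succ (Term.var 0))))).all).imp φ.all))
  | atomDec (t u : Term) : HAAx ((Formula.eq t u).or (Formula.eq t u).neg)

/-- Provability from `HA` (in the language possibly containing `$`)
together with the extra axioms `T`. -/
inductive Proves (T : Set Formula) : Formula → Prop
  | ax {φ : Formula} : φ ∈ T → Proves T φ
  | ha {φ : Formula} : HAAx φ → Proves T φ
  | mp {φ ψ : Formula} : Proves T (φ.imp ψ) → Proves T φ → Proves T ψ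
  | gen {φ : Formula} : Proves T φ → Proves T φ.all

/-- The scheme `Σ_k-LEM`. -/
def sigLEM (k : ℕ) : Set Formula := {ψ | ∃ φ : Formula, IsSigma k φ ∧ ψ = φ.or φ.neg}

/-- The full law of excluded middle for `HA`-formulas; `Proves lemSet` is `PA`-provability. -/
def lemSet : Set Formula := {ψ | ∃ φ : Formula, φ.noDollar ∧ ψ = φ.or φ.neg}

/-- The scheme `F_k-LEM`: excluded middle for `HA`-formulas of degree at most `k`. -/
def fLEM (k : ℕ) : Set Formula :=
  {ψ | ∃ φ : Formula, φ.noDollar ∧ φ.degree ≤ k ∧ ψ = φ.or φ.neg}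

/-- `T` is (the set of extra axioms of) a semi-classical arithmetic:
`HA ⊆ HA + T ⊆ PA`, i.e. all axioms are `HA`-formulas provable in `PA`. -/
def IsSemiClassical (T : Set Formula) : Prop :=
  ∀ φ ∈ T, φ.noDollar ∧ Proves lemSet φ

mutual
  /-- The class `ℛ_{k+1}` (index `k` denotes `ℛ_{k+1}`). -/
  inductive Rcl : ℕ → Formula → Prop
    | base {k : ℕ} {φ : Formula} : φ.degree ≤ k → φ.noDollar → Rcl k φ
    | and {k : ℕ} {φ ψ : Formula} : Rcl k φ → Rcl k ψ → Rcl k (φ.and ψ)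
    | or {k : ℕ} {φ ψ : Formula} : Rcl k φ → Rcl k ψ → Rcl k (φ.or ψ)
    | all {k : ℕ} {φ : Formula} : Rcl k φ → Rcl k φ.all
    | imp {k : ℕ} {φ ψ : Formula} : Jcl k φ → Rcl k ψ → Rcl k (φ.imp ψ)
  /-- The class `𝒥_{k+1}` (index `k` denotes `𝒥_{k+1}`). -/
  inductive Jcl : ℕ → Formula → Prop
    | base {k : ℕ} {φ : Formula} : φ.degree ≤ k → φ.noDollar → Jcl k φ
    | and {k : ℕ} {φ ψ : Formula} : Jcl k φ → Jcl k ψ → Jcl k (φ.and ψ)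
    | or {k : ℕ} {φ ψ : Formula} : Jcl k φ → Jcl k ψ → Jcl k (φ.or ψ)
    | ex {k : ℕ} {φ : Formula} : Jcl k φ → Jcl k φ.ex
    | imp {k : ℕ} {φ ψ : Formula} : Rcl k φ → Jcl k ψ → Jcl k (φ.imp ψ)
end

/-- The class `𝒬_{k+1}` (index `k` denotes `𝒬_{k+1}`): generated from prime formulas by
`∧, ∨, ∀, ∃` and implications `J → Q` with `J ∈ 𝒥_{k+1}`. -/
inductive Qcl : ℕ → Formula → Prop
  | falsum {k : ℕ} : Qcl k Formula.falsum
  | eq {k : ℕ} {t u : Term} : Qcl k (Formula.eq t u)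
  | and {k : ℕ} {φ ψ : Formula} : Qcl k φ → Qcl k ψ → Qcl k (φ.and ψ)
  | or {k : ℕ} {φ ψ : Formula} : Qcl k φ → Qcl k ψ → Qcl k (φ.or ψ)
  | all {k : ℕ} {φ : Formula} : Qcl k φ → Qcl k φ.all
  | ex {k : ℕ} {φ : Formula} : Qcl k φ → Qcl k φ.ex
  | imp {k : ℕ} {φ ψ : Formula} : Jcl k φ → Qcl k ψ → Qcl k (φ.imp ψ)

/-- The class `𝒱_{k+1}` (index `k` denotes `𝒱_{k+1}`): generated from `𝒥_{k+1}` by `∧, ∀`. -/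
inductive Vcl : ℕ → Formula → Prop
  | ofJ {k : ℕ} {φ : Formula} : Jcl k φ → Vcl k φ
  | and {k : ℕ} {φ ψ : Formula} : Vcl k φ → Vcl k ψ → Vcl k (φ.and ψ)
  | all {k : ℕ} {φ : Formula} : Vcl k φ → Vcl k φ.all

/-- The class `EΠ_k`: generated from `Π_k` formulas by `∨` and `∀`. -/
inductive EPi (k : ℕ) : Formula → Prop
  | ofPi {φ : Formula} : IsPi k φ → EPi k φ
  | or {φ ψ : Formula} : EPi k φ → EPi k ψ → EPi k (φ.or ψ)
  | all {φ : Formula} : EPi k φ → EPi k φ.all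

/-- The class `EΣ_{k+1}` (index `k` denotes `EΣ_{k+1}`): existential quantifications
of `EΠ_k` formulas. -/
inductive ESig (k : ℕ) : Formula → Prop
  | ofEPi {φ : Formula} : EPi k φ → ESig k φ
  | ex {φ : Formula} : ESig k φ → ESig k φ.ex

/-- The scheme `Γ-DNEC`: universal closure of `¬¬φ` implies universal closure of `φ`. -/
def dnecSet (Γ : Set Formula) : Set Formula :=
  {ψ | ∃ φ ∈ Γ, ψ = (φ.neg.neg.univClosure).imp φ.univClosure}

/-- The scheme `Γ-DNSC`: universal closure of `¬¬φ` implies `¬¬` of the universal closure. -/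
def dnscSet (Γ : Set Formula) : Set Formula :=
  {ψ | ∃ φ ∈ Γ, ψ = (φ.neg.neg.univClosure).imp φ.univClosure.neg.neg}

/-- Double-negation elimination for sentences in `Γ`. -/
def dneSentSet (Γ : Set Formula) : Set Formula :=
  {ψ | ∃ φ ∈ Γ, φ.sentence ∧ ψ = φ.neg.neg.imp φ}



namespace Aux
open Formula Term

/-! ### de Bruijn lemmas -/

theorem zero_lift (d : ℕ) : Term.zero.lift d = Term.zero := by
  show Term.func 0 0 _ = _
  unfold Term.zero
  congr
  funext i
  exact i.elim0


theorem tsubst_lift (t : Term) : ∀ (j : ℕ) (s : Term), Term.subst j s (t.lift j) = t := by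
  induction t with
  | var n =>
      intro j s
      by_cases h : n < j
      · simp [Term.lift, h, Term.subst]
      · have h1 : ¬ (n + 1 < j) := by omega
        have h2 : ¬ (n + 1 = j) := by omega
        simp [Term.lift, h, Term.subst, h1, h2]
  | func c a ts ih =>
      intro j s
      simp only [Term.lift, Term.subst]
      congr 1
      funext i
      exact ih i j s

theorem fsubst_lift (φ : Formula) : ∀ (j : ℕ) (s : Term), (φ.lift j).subst j s = φ := by
  induction φ with
  | falsum => intro j s; rfl
  | dollar => intro j s; rfl
  | eq t u => intro j s; simp [Formula.lift, Formula.subst, tsubst_lift]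
  | and φ ψ ih1 ih2 => intro j s; simp [Formula.lift, Formula.subst, ih1, ih2]
  | or φ ψ ih1 ih2 => intro j s; simp [Formula.lift, Formula.subst, ih1, ih2]
  | imp φ ψ ih1 ih2 => intro j s; simp [Formula.lift, Formula.subst, ih1, ih2]
  | all φ ih => intro j s; simp [Formula.lift, Formula.subst, ih]
  | ex φ ih => intro j s; simp [Formula.lift, Formula.subst, ih]


theorem tsubst_varlift (t : Term) : ∀ (k : ℕ), Term.subst k (Term.var k) (t.lift (k+1)) = t := by
  induction t with
  | var n =>
      intro k
      by_cases h : n < k + 1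
      · by_cases h2 : n < k
        · simp [Term.lift, h, Term.subst, h2]
        · have h3 : n = k := by omega
          simp [Term.lift, h, Term.subst, h2, h3]
      · have h1 : ¬ (n + 1 < k) := by omega
        have h2 : ¬ (n + 1 = k) := by omega
        simp [Term.lift, h, Term.subst, h1, h2]
  | func c a ts ih =>
      intro k
      simp only [Term.lift, Term.subst]
      congr 1
      funext i
      exact ih i k

theorem varlift (k : ℕ) : (Term.var k).lift 0 = Term.var (k+1) := by
  simp [Term.lift]

theorem fsubst_varlift (φ : Formula) : ∀ (k : ℕ), (φ.lift (k+1)).subst k (Term.var k) = φ := by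
  induction φ with
  | falsum => intro k; rfl
  | dollar => intro k; rfl
  | eq t u => intro k; simp [Formula.lift, Formula.subst, tsubst_varlift]
  | and φ ψ ih1 ih2 => intro k; simp [Formula.lift, Formula.subst, ih1, ih2]
  | or φ ψ ih1 ih2 => intro k; simp [Formula.lift, Formula.subst, ih1, ih2]
  | imp φ ψ ih1 ih2 => intro k; simp [Formula.lift, Formula.subst, ih1, ih2]
  | all φ ih => intro k; simp [Formula.lift, Formula.subst, varlift, ih]
  | ex φ ih => intro k; simp [Formula.lift, Formula.subst, varlift, ih]

theorem lift_neg (d : ℕ) (φ : Formula) : (φ.neg).lift d = (φ.lift d).neg := rfl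

theorem lift_or (d : ℕ) (φ ψ : Formula) : (φ.or ψ).lift d = (φ.lift d).or (ψ.lift d) := rfl

/-- `r`-fold existential quantification, outermost applied last. -/
def exN : Formula → ℕ → Formula
  | φ, 0 => φ
  | φ, n + 1 => exN φ.ex n

theorem allN_succ (φ : Formula) : ∀ n, φ.allN (n+1) = (φ.allN n).all := by
  intro n
  induction n generalizing φ with
  | zero => rfl
  | succ n ih => show (φ.all).allN (n+1) = _; rw [ih]; rfl

theorem exN_succ (φ : Formula) : ∀ n, exN φ (n+1) = (exN φ n).ex := by
  intro n
  induction n generalizing φ with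
  | zero => rfl
  | succ n ih => show exN (φ.ex) (n+1) = _; rw [ih]; rfl

theorem lift_allN (φ : Formula) : ∀ (r d : ℕ), (φ.allN r).lift d = (φ.lift (d+r)).allN r := by
  intro r
  induction r generalizing φ with
  | zero => intro d; rfl
  | succ r ih =>
      intro d
      rw [allN_succ, allN_succ]
      show Formula.all (((φ.allN r)).lift (d+1)) = _
      rw [ih, show d + 1 + r = d + (r+1) by omega]

theorem lift_exN (φ : Formula) : ∀ (r d : ℕ), (exN φ r).lift d = exN (φ.lift (d+r)) r := by
  intro r
  induction r generalizing φ with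
  | zero => intro d; rfl
  | succ r ih =>
      intro d
      rw [exN_succ, exN_succ]
      show Formula.ex (((exN φ r)).lift (d+1)) = _
      rw [ih, show d + 1 + r = d + (r+1) by omega]

/-- shift all variables up by `r`. -/
def shiftN (r : ℕ) (φ : Formula) : Formula := (Formula.lift 0)^[r] φ

theorem shiftN_zero (φ : Formula) : shiftN 0 φ = φ := rfl

theorem shiftN_succ (r : ℕ) (φ : Formula) : shiftN (r+1) φ = shiftN r (φ.lift 0) :=
  Function.iterate_succ_apply _ _ _

theorem shiftN_succ' (r : ℕ) (φ : Formula) : shiftN (r+1) φ = (shiftN r φ).lift 0 :=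
  Function.iterate_succ_apply' _ _ _

theorem shiftN_or (r : ℕ) (φ ψ : Formula) :
    shiftN r (φ.or ψ) = (shiftN r φ).or (shiftN r ψ) := by
  induction r generalizing φ ψ with
  | zero => rfl
  | succ r ih => rw [shiftN_succ, shiftN_succ, shiftN_succ, lift_or, ih]

theorem shiftN_neg (r : ℕ) (φ : Formula) : shiftN r φ.neg = (shiftN r φ).neg := by
  induction r generalizing φ with
  | zero => rfl
  | succ r ih => rw [shiftN_succ, shiftN_succ, lift_neg, ih]

theorem shiftN_allN (Z : Formula) (r : ℕ) : ∀ j, shiftN j (Z.allN r) = ((Formula.lift r)^[j] Z).allN r := by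
  intro j
  induction j with
  | zero => rfl
  | succ j ih =>
      rw [shiftN_succ', ih, lift_allN, Function.iterate_succ_apply', Nat.zero_add]

theorem shiftN_exN (Z : Formula) (r : ℕ) : ∀ j, shiftN j (exN Z r) = exN ((Formula.lift r)^[j] Z) r := by
  intro j
  induction j with
  | zero => rfl
  | succ j ih =>
      rw [shiftN_succ', ih, lift_exN, Function.iterate_succ_apply', Nat.zero_add]

theorem dual_allN (θ : Formula) : ∀ r, (θ.allN r).dual = exN θ.dual r := by
  intro r
  induction r generalizing θ with
  | zero => rfl
  | succ r ih =>
      rw [allN_succ, exN_succ]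
      show Formula.ex ((θ.allN r).dual) = _
      rw [ih]

theorem dual_exN (θ : Formula) : ∀ r, (exN θ r).dual = (θ.dual).allN r := by
  intro r
  induction r generalizing θ with
  | zero => rfl
  | succ r ih =>
      rw [exN_succ, allN_succ]
      show Formula.all ((exN θ r).dual) = _
      rw [ih]

theorem dual_qf {φ : Formula} (h : φ.isQF) : φ.dual = φ.neg := by
  cases φ <;> first
    | rfl
    | exact absurd h (by simp [Formula.isQF])

end Aux

namespace Aux
open Formula

/-! ### class lemmas -/

theorem isQF_lift {φ : Formula} (h : φ.isQF) : ∀ d, (φ.lift d).isQF := by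
  induction φ <;> intro d <;> simp_all [Formula.isQF, Formula.lift]

theorem isQF_neg {φ : Formula} (h : φ.isQF) : (φ.neg).isQF := ⟨h, trivial⟩

theorem isQF_or {φ ψ : Formula} (h1 : φ.isQF) (h2 : ψ.isQF) : (φ.or ψ).isQF := ⟨h1, h2⟩

theorem qf_sigma_pi {φ : Formula} (h : φ.isQF) : ∀ m, IsSigma m φ ∧ IsPi m φ := by
  intro m
  induction m with
  | zero => exact ⟨.qf h, .qf h⟩
  | succ m ih => exact ⟨.ofPi ih.2, .ofSigma ih.1⟩

theorem sigma_succ : ∀ {k : ℕ} {φ : Formula}, IsSigma k φ → IsSigma (k+1) φ :=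
  fun h => IsSigma.rec (motive_1 := fun k φ _ => IsSigma (k+1) φ)
    (motive_2 := fun k φ _ => IsPi (k+1) φ)
    (fun h => .ofPi (.qf h))
    (fun _ ih => .ofPi ih)
    (fun _ ih => .ex ih)
    (fun h => .ofSigma (.qf h))
    (fun _ ih => .ofSigma ih)
    (fun _ ih => .all ih) h

theorem pi_succ : ∀ {k : ℕ} {φ : Formula}, IsPi k φ → IsPi (k+1) φ :=
  fun h => IsPi.rec (motive_1 := fun k φ _ => IsSigma (k+1) φ)
    (motive_2 := fun k φ _ => IsPi (k+1) φ)
    (fun h => .ofPi (.qf h))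
    (fun _ ih => .ofPi ih)
    (fun _ ih => .ex ih)
    (fun h => .ofSigma (.qf h))
    (fun _ ih => .ofSigma ih)
    (fun _ ih => .all ih) h

theorem sigma_mono {k k' : ℕ} (hk : k ≤ k') {φ : Formula} (h : IsSigma k φ) : IsSigma k' φ := by
  induction hk with
  | refl => exact h
  | step _ ih => exact sigma_succ ih

theorem pi_mono {k k' : ℕ} (hk : k ≤ k') {φ : Formula} (h : IsPi k φ) : IsPi k' φ := by
  induction hk with
  | refl => exact h
  | step _ ih => exact pi_succ ih

theorem sigma_lift : ∀ {k : ℕ} {φ : Formula}, IsSigma k φ → ∀ d, IsSigma k (φ.lift d) :=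
  fun h => IsSigma.rec (motive_1 := fun k φ _ => ∀ d, IsSigma k (φ.lift d))
    (motive_2 := fun k φ _ => ∀ d, IsPi k (φ.lift d))
    (fun h d => .qf (isQF_lift h d))
    (fun _ ih d => .ofPi (ih d))
    (fun _ ih d => .ex (ih (d+1)))
    (fun h d => .qf (isQF_lift h d))
    (fun _ ih d => .ofSigma (ih d))
    (fun _ ih d => .all (ih (d+1))) h

theorem pi_lift : ∀ {k : ℕ} {φ : Formula}, IsPi k φ → ∀ d, IsPi k (φ.lift d) :=
  fun h => IsPi.rec (motive_1 := fun k φ _ => ∀ d, IsSigma k (φ.lift d))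
    (motive_2 := fun k φ _ => ∀ d, IsPi k (φ.lift d))
    (fun h d => .qf (isQF_lift h d))
    (fun _ ih d => .ofPi (ih d))
    (fun _ ih d => .ex (ih (d+1)))
    (fun h d => .qf (isQF_lift h d))
    (fun _ ih d => .ofSigma (ih d))
    (fun _ ih d => .all (ih (d+1))) h

theorem sigma_liftIter {k : ℕ} {φ : Formula} (h : IsSigma k φ) (d : ℕ) :
    ∀ j, IsSigma k ((Formula.lift d)^[j] φ) := by
  intro j
  induction j with
  | zero => exact h
  | succ j ih => rw [Function.iterate_succ_apply']; exact sigma_lift ih d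

theorem pi_liftIter {k : ℕ} {φ : Formula} (h : IsPi k φ) (d : ℕ) :
    ∀ j, IsPi k ((Formula.lift d)^[j] φ) := by
  intro j
  induction j with
  | zero => exact h
  | succ j ih => rw [Function.iterate_succ_apply']; exact pi_lift ih d

theorem sigma_shiftN {k : ℕ} {φ : Formula} (h : IsSigma k φ) (r : ℕ) :
    IsSigma k (shiftN r φ) := sigma_liftIter h 0 r

theorem pi_shiftN {k : ℕ} {φ : Formula} (h : IsPi k φ) (r : ℕ) :
    IsPi k (shiftN r φ) := pi_liftIter h 0 r

theorem dual_pi : ∀ {k : ℕ} {φ : Formula}, IsSigma k φ → IsPi k φ.dual :=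
  fun h => IsSigma.rec (motive_1 := fun k φ _ => IsPi k φ.dual)
    (motive_2 := fun k φ _ => IsSigma k φ.dual)
    (fun h => by rw [dual_qf h]; exact .qf (isQF_neg h))
    (fun _ ih => .ofSigma ih)
    (fun _ ih => .all ih)
    (fun h => by rw [dual_qf h]; exact .qf (isQF_neg h))
    (fun _ ih => .ofPi ih)
    (fun _ ih => .ex ih) h

theorem dual_sigma : ∀ {k : ℕ} {φ : Formula}, IsPi k φ → IsSigma k φ.dual :=
  fun h => IsPi.rec (motive_1 := fun k φ _ => IsPi k φ.dual)
    (motive_2 := fun k φ _ => IsSigma k φ.dual)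
    (fun h => by rw [dual_qf h]; exact .qf (isQF_neg h))
    (fun _ ih => .ofSigma ih)
    (fun _ ih => .all ih)
    (fun h => by rw [dual_qf h]; exact .qf (isQF_neg h))
    (fun _ ih => .ofPi ih)
    (fun _ ih => .ex ih) h

theorem allN_pi {m : ℕ} {θ : Formula} (h : IsPi (m+1) θ) : ∀ r, IsPi (m+1) (θ.allN r) := by
  intro r
  induction r with
  | zero => exact h
  | succ r ih => rw [allN_succ]; exact .all ih

theorem exN_sigma {m : ℕ} {θ : Formula} (h : IsSigma (m+1) θ) : ∀ r, IsSigma (m+1) (exN θ r) := by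
  intro r
  induction r with
  | zero => exact h
  | succ r ih => rw [exN_succ]; exact .ex ih

theorem nf_sigma {m : ℕ} : ∀ {φ : Formula}, IsSigma (m+1) φ → ∃ r θ, IsPi m θ ∧ φ = exN θ r := by
  intro φ
  induction φ with
  | ex ψ ih =>
      intro h
      cases h with
      | ofPi h => exact ⟨0, _, h, rfl⟩
      | ex h =>
          obtain ⟨r, θ, hθ, rfl⟩ := ih h
          exact ⟨r+1, θ, hθ, (exN_succ θ r).symm⟩
  | _ =>
      intro h
      cases h with
      | ofPi h => exact ⟨0, _, h, rfl⟩

theorem nf_pi {m : ℕ} : ∀ {φ : Formula}, IsPi (m+1) φ → ∃ r θ, IsSigma m θ ∧ φ = θ.allN r := by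
  intro φ
  induction φ with
  | all ψ ih =>
      intro h
      cases h with
      | ofSigma h => exact ⟨0, _, h, rfl⟩
      | all h =>
          obtain ⟨r, θ, hθ, rfl⟩ := ih h
          exact ⟨r+1, θ, hθ, (allN_succ θ r).symm⟩
  | _ =>
      intro h
      cases h with
      | ofSigma h => exact ⟨0, _, h, rfl⟩

theorem qf_of_sigma0 {φ : Formula} (h : IsSigma 0 φ) : φ.isQF := by cases h; assumption

theorem qf_of_pi0 {φ : Formula} (h : IsPi 0 φ) : φ.isQF := by cases h; assumption

end Aux

namespace Aux
open Formula

/-! ### Hilbert-style toolkit -/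

/-- The set of theorems of `T`. -/
def Thms (T : Set Formula) : Set Formula := {φ | Proves T φ}

/-- Derivations without generalization, used for the deduction theorem. -/
inductive NG (S : Set Formula) : Formula → Prop
  | ax {φ : Formula} : φ ∈ S → NG S φ
  | ha {φ : Formula} : HAAx φ → NG S φ
  | mp {φ ψ : Formula} : NG S (φ.imp ψ) → NG S φ → NG S ψ

theorem NG.weak {S S' : Set Formula} {φ : Formula} (h : NG S φ) (hs : S ⊆ S') : NG S' φ := by
  induction h with
  | ax h => exact .ax (hs h)
  | ha h => exact .ha h
  | mp _ _ ih1 ih2 => exact .mp ih1 ih2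

theorem NG.imp_refl {S : Set Formula} (φ : Formula) : NG S (φ.imp φ) :=
  .mp (.mp (.ha (.axS φ (φ.imp φ) φ)) (.ha (.axK φ (φ.imp φ)))) (.ha (.axK φ φ))

theorem NG.dt {S : Set Formula} {χ φ : Formula} (h : NG (insert χ S) φ) : NG S (χ.imp φ) := by
  induction h with
  | ax h =>
      rcases h with h | h
      · subst h; exact NG.imp_refl _
      · exact .mp (.ha (.axK _ χ)) (.ax h)
  | ha h => exact .mp (.ha (.axK _ χ)) (.ha h)
  | mp _ _ ih1 ih2 => exact .mp (.mp (.ha (.axS _ _ _)) ih1) ih2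

theorem NG_thms {T : Set Formula} {φ : Formula} (h : NG (Thms T) φ) : Proves T φ := by
  induction h with
  | ax h => exact h
  | ha h => exact .ha h
  | mp _ _ ih1 ih2 => exact .mp ih1 ih2

theorem Thms_subset_insert {T : Set Formula} {A : Formula} {S : Set Formula}
    (h : Thms T ⊆ S) : Thms T ⊆ insert A S := fun _ hx => Set.mem_insert_of_mem _ (h hx)

theorem NG.pv {T : Set Formula} {S : Set Formula} (hS : Thms T ⊆ S) {ψ : Formula}
    (h : Proves T ψ) : NG S ψ := .ax (hS h)

theorem ng1 {T : Set Formula} {A B : Formula}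
    (h : NG (insert A (Thms T)) B) : Proves T (A.imp B) := NG_thms h.dt

theorem ng2 {T : Set Formula} {A B C : Formula}
    (h : NG (insert B (insert A (Thms T))) C) : Proves T (A.imp (B.imp C)) :=
  NG_thms h.dt.dt

/-! prop-logic basics -/

theorem imp_refl {T : Set Formula} (φ : Formula) : Proves T (φ.imp φ) := NG_thms (NG.imp_refl φ)

theorem imp_trans {T : Set Formula} {A B C : Formula}
    (h1 : Proves T (A.imp B)) (h2 : Proves T (B.imp C)) : Proves T (A.imp C) :=
  ng1 (.mp (.pv (Thms_subset_insert fun _ h => h) h2)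
        (.mp (.pv (Thms_subset_insert fun _ h => h) h1) (.ax (Set.mem_insert _ _))))

theorem orE_rule {T : Set Formula} {A B C : Formula}
    (h1 : Proves T (A.imp C)) (h2 : Proves T (B.imp C)) : Proves T ((A.or B).imp C) :=
  .mp (.mp (.ha (.orE A B C)) h1) h2

theorem orI1 {T : Set Formula} (A B : Formula) : Proves T (A.imp (A.or B)) := .ha (.orI1 A B)
theorem orI2 {T : Set Formula} (A B : Formula) : Proves T (B.imp (A.or B)) := .ha (.orI2 A B)

theorem or_mono {T : Set Formula} {A B A' B' : Formula}
    (h1 : Proves T (A.imp A')) (h2 : Proves T (B.imp B')) :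
    Proves T ((A.or B).imp (A'.or B')) :=
  orE_rule (imp_trans h1 (orI1 A' B')) (imp_trans h2 (orI2 A' B'))

theorem or_comm' {T : Set Formula} (A B : Formula) : Proves T ((A.or B).imp (B.or A)) :=
  orE_rule (orI2 B A) (orI1 B A)

theorem contrapos {T : Set Formula} {A B : Formula}
    (h : Proves T (A.imp B)) : Proves T (B.neg.imp A.neg) := by
  refine ng2 ?_
  have hS : Thms T ⊆ insert A (insert B.neg (Thms T)) :=
    Thms_subset_insert (Thms_subset_insert fun _ h => h)
  exact NG.mp (.ax (Set.mem_insert_of_mem _ (Set.mem_insert _ _)))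
    (.mp (.pv hS h) (.ax (Set.mem_insert _ _)))

theorem dneg_mono {T : Set Formula} {A B : Formula}
    (h : Proves T (A.imp B)) : Proves T (A.neg.neg.imp B.neg.neg) :=
  contrapos (contrapos h)

theorem neg_or_elim {T : Set Formula} {A B : Formula}
    (h : Proves T (A.or B)) : Proves T (A.neg.imp B) := by
  have h1 : Proves T (A.imp (A.neg.imp B)) := by
    refine ng2 ?_
    exact NG.mp (.ha (.efq B))
      (.mp (.ax (Set.mem_insert _ _)) (.ax (Set.mem_insert_of_mem _ (Set.mem_insert _ _))))
  have h2 : Proves T (B.imp (A.neg.imp B)) := .ha (.axK B A.neg)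
  exact .mp (orE_rule h1 h2) h

theorem neg_imp_cancel {T : Set Formula} (X Z : Formula) :
    Proves T (Z.neg.imp ((X.or Z).imp X)) := by
  refine ng2 ?_
  refine NG.mp (.mp (.mp (.ha (.orE X Z X)) (NG.imp_refl X)) ?_) (.ax (Set.mem_insert _ _))
  refine NG.dt ?_
  exact NG.mp (.ha (.efq X))
    (.mp (.ax (Set.mem_insert_of_mem _ (Set.mem_insert_of_mem _ (Set.mem_insert _ _))))
      (.ax (Set.mem_insert _ _)))

theorem nneg_lem {T : Set Formula} (A : Formula) : Proves T ((A.or A.neg).neg.neg) := by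
  refine ng1 ?_
  have hH : NG (insert (A.or A.neg).neg (Thms T)) ((A.or A.neg).neg) := .ax (Set.mem_insert _ _)
  have hnA : NG (insert (A.or A.neg).neg (Thms T)) A.neg := by
    refine NG.dt ?_
    exact NG.mp (.ax (Set.mem_insert_of_mem _ (Set.mem_insert _ _)))
      (.mp (.ha (.orI1 A A.neg)) (.ax (Set.mem_insert _ _)))
  exact NG.mp hH (.mp (.ha (.orI2 A A.neg)) hnA)

theorem swap_neg {T : Set Formula} {A B : Formula}
    (h : Proves T (A.imp B.neg)) : Proves T (B.imp A.neg) := by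
  refine ng2 ?_
  have hS : Thms T ⊆ insert A (insert B (Thms T)) :=
    Thms_subset_insert (Thms_subset_insert fun _ h => h)
  exact NG.mp (.mp (.pv hS h) (.ax (Set.mem_insert _ _)))
    (.ax (Set.mem_insert_of_mem _ (Set.mem_insert _ _)))

theorem imp_swap_hyp {T : Set Formula} {P H R : Formula}
    (h : Proves T (P.imp (H.imp R))) (h2 : Proves T (R.imp R')) :
    Proves T (P.imp (H.imp R')) := by
  refine ng2 ?_
  have hS : Thms T ⊆ insert H (insert P (Thms T)) :=
    Thms_subset_insert (Thms_subset_insert fun _ h => h)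
  exact NG.mp (.pv hS h2)
    (.mp (.mp (.pv hS h) (.ax (Set.mem_insert_of_mem _ (Set.mem_insert _ _))))
      (.ax (Set.mem_insert _ _)))

theorem const_imp {T : Set Formula} {A B : Formula} (h : Proves T B) :
    Proves T (A.imp B) := .mp (.ha (.axK B A)) h

/-! quantifier toolkit -/

theorem all_mono {T : Set Formula} {A B : Formula}
    (h : Proves T (A.imp B)) : Proves T (A.all.imp B.all) :=
  .mp (.ha (.allK A B)) (.gen h)

theorem all_vac {T : Set Formula} (A : Formula) : Proves T (A.imp (A.lift 0).all) :=
  .ha (.allVac A)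

theorem avac {T : Set Formula} {A B : Formula}
    (h : Proves T ((A.lift 0).imp B)) : Proves T (A.imp B.all) :=
  imp_trans (all_vac A) (all_mono h)

theorem exvac {T : Set Formula} (A : Formula) : Proves T (A.imp (A.lift 0).ex) := by
  have := Proves.ha (T := T) (.exI (A.lift 0) Term.zero)
  rwa [fsubst_lift] at this

theorem exI_var {T : Set Formula} (A : Formula) : Proves T (A.imp (A.lift 1).ex) := by
  have := Proves.ha (T := T) (.exI (A.lift 1) (Term.var 0))
  rwa [fsubst_varlift] at this

theorem ex_mono {T : Set Formula} {A B : Formula}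
    (h : Proves T (A.imp B)) : Proves T (A.ex.imp B.ex) := by
  refine .mp (.ha (.exE A B.ex)) (.gen ?_)
  show Proves T (A.imp (B.lift 1).ex)
  exact imp_trans h (exI_var B)

theorem exE_rule {T : Set Formula} {A B : Formula}
    (h : Proves T (A.imp (B.lift 0))) : Proves T (A.ex.imp B) :=
  .mp (.ha (.exE A B)) (.gen h)

theorem spec1 {T : Set Formula} (A : Formula) : Proves T ((A.lift 1).all.imp A) := by
  have := Proves.ha (T := T) (.allE (A.lift 1) (Term.var 0))
  rwa [fsubst_varlift] at this

theorem qNegEx {T : Set Formula} (A : Formula) : Proves T ((A.ex).neg.imp (A.neg).all) := by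
  refine avac ?_
  show Proves T (((A.lift 1).ex).neg.imp A.neg)
  exact contrapos (exI_var A)

theorem allimp1 {T : Set Formula} {P Q R : Formula}
    (h : Proves T ((P.lift 0).imp (Q.imp R))) :
    Proves T (P.imp (Q.all.imp R.all)) := by
  have h1 : Proves T ((P.lift 0).all.imp (Q.imp R).all) := all_mono h
  have h2 : Proves T (P.imp (Q.imp R).all) := imp_trans (all_vac P) h1
  exact imp_trans h2 (.ha (.allK Q R))

end Aux

namespace Aux
open Formula

/-! ### iterated quantifier lemmas -/

theorem allN_mono {T : Set Formula} {A B : Formula}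
    (h : Proves T (A.imp B)) : ∀ r, Proves T ((A.allN r).imp (B.allN r)) := by
  intro r
  induction r with
  | zero => exact h
  | succ r ih => rw [allN_succ, allN_succ]; exact all_mono ih

theorem exN_mono {T : Set Formula} {A B : Formula}
    (h : Proves T (A.imp B)) : ∀ r, Proves T ((exN A r).imp (exN B r)) := by
  intro r
  induction r with
  | zero => exact h
  | succ r ih => rw [exN_succ, exN_succ]; exact ex_mono ih

theorem avacN {T : Set Formula} :
    ∀ (r : ℕ) {A B : Formula}, Proves T ((shiftN r A).imp B) → Proves T (A.imp (B.allN r)) := by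
  intro r
  induction r with
  | zero => intro A B h; exact h
  | succ r ih =>
      intro A B h
      rw [allN_succ]
      refine avac ?_
      exact ih (by rwa [← shiftN_succ])

theorem exvacN {T : Set Formula} : ∀ (r : ℕ) (A : Formula), Proves T (A.imp (exN (shiftN r A) r)) := by
  intro r
  induction r with
  | zero => intro A; exact imp_refl A
  | succ r ih =>
      intro A
      rw [shiftN_succ, exN_succ]
      exact imp_trans (exvac A) (ex_mono (ih (A.lift 0)))

theorem allimpN {T : Set Formula} :
    ∀ (r : ℕ) {P Q R : Formula}, Proves T ((shiftN r P).imp (Q.imp R)) →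
      Proves T (P.imp ((Q.allN r).imp (R.allN r))) := by
  intro r
  induction r with
  | zero => intro P Q R h; exact h
  | succ r ih =>
      intro P Q R h
      rw [allN_succ, allN_succ]
      exact allimp1 (ih (by rwa [← shiftN_succ]))

theorem qNegExN {T : Set Formula} : ∀ (r : ℕ) (A : Formula),
    Proves T ((exN A r).neg.imp ((A.neg).allN r)) := by
  intro r
  induction r with
  | zero => intro A; exact imp_refl _
  | succ r ih =>
      intro A
      rw [exN_succ, allN_succ]
      exact imp_trans (qNegEx (exN A r)) (all_mono (ih A))

theorem expull_r {T : Set Formula} (X Y : Formula) :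
    Proves T ((X.or (Y.lift 0)).ex.imp ((X.ex).or Y)) := by
  refine exE_rule ?_
  show Proves T ((X.or (Y.lift 0)).imp (((X.lift 1).ex).or (Y.lift 0)))
  exact or_mono (exI_var X) (imp_refl _)

theorem expull_l {T : Set Formula} (X Y : Formula) :
    Proves T (((Y.lift 0).or X).ex.imp (Y.or (X.ex))) := by
  refine exE_rule ?_
  show Proves T (((Y.lift 0).or X).imp ((Y.lift 0).or ((X.lift 1).ex)))
  exact or_mono (imp_refl _) (exI_var X)

theorem exorv {T : Set Formula} : ∀ (r : ℕ) (A B : Formula),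
    Proves T ((exN (A.or (shiftN r B)) r).imp ((exN A r).or B)) := by
  intro r
  induction r with
  | zero => intro A B; exact imp_refl _
  | succ r ih =>
      intro A B
      rw [shiftN_succ, exN_succ, exN_succ]
      have h1 : Proves T ((exN (A.or (shiftN r (B.lift 0))) r).imp ((exN A r).or (B.lift 0))) :=
        ih A (B.lift 0)
      exact imp_trans (ex_mono h1) (expull_r (exN A r) B)

/-- `⊢ φ⊥ → ¬φ`. -/
theorem dual_imp_neg {T : Set Formula} : ∀ (φ : Formula), Proves T (φ.dual.imp φ.neg) := by
  intro φ
  induction φ with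
  | all ψ ih =>
      show Proves T ((ψ.dual.ex).imp (ψ.all).neg)
      refine exE_rule ?_
      show Proves T (ψ.dual.imp ((ψ.lift 1).all).neg)
      refine ng2 ?_
      have hS : Thms T ⊆ insert ((ψ.lift 1).all) (insert ψ.dual (Thms T)) :=
        Thms_subset_insert (Thms_subset_insert fun _ h => h)
      exact NG.mp
        (.mp (.pv hS ih) (.ax (Set.mem_insert_of_mem _ (Set.mem_insert _ _))))
        (.mp (.pv hS (spec1 ψ)) (.ax (Set.mem_insert _ _)))
  | ex ψ ih =>
      show Proves T ((ψ.dual.all).imp (ψ.ex).neg)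
      refine swap_neg ?_
      refine exE_rule ?_
      show Proves T (ψ.imp ((ψ.dual.lift 1).all).neg)
      refine ng2 ?_
      have hS : Thms T ⊆ insert ((ψ.dual.lift 1).all) (insert ψ (Thms T)) :=
        Thms_subset_insert (Thms_subset_insert fun _ h => h)
      exact NG.mp
        (.mp (.pv hS ih)
          (.mp (.pv hS (spec1 ψ.dual)) (.ax (Set.mem_insert _ _))))
        (.ax (Set.mem_insert_of_mem _ (Set.mem_insert _ _)))
  | falsum => exact imp_refl _
  | dollar => exact imp_refl _
  | eq t u => exact imp_refl _
  | and φ ψ _ _ => exact imp_refl _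
  | or φ ψ _ _ => exact imp_refl _
  | imp φ ψ _ _ => exact imp_refl _

theorem imp_neg_dual {T : Set Formula} (φ : Formula) : Proves T (φ.imp (φ.dual).neg) :=
  swap_neg (dual_imp_neg φ)

/-- pull a top `∀` out of a disjunction, given decidability of the other side. -/
theorem pull_l {T : Set Formula} {X Y : Formula} (hdec : Proves T (Y.or Y.neg)) :
    Proves T ((X.or (Y.lift 0)).all.imp ((X.all).or Y)) := by
  have b1 : Proves T (Y.imp ((X.or (Y.lift 0)).all.imp ((X.all).or Y))) := by
    refine ng2 ?_
    exact NG.mp (.ha (.orI2 X.all Y))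
      (.ax (Set.mem_insert_of_mem _ (Set.mem_insert _ _)))
  have hstep : Proves T (Y.neg.imp ((X.or (Y.lift 0)).all.imp (X.all))) := by
    refine allimp1 ?_
    show Proves T ((Y.lift 0).neg.imp ((X.or (Y.lift 0)).imp X))
    exact neg_imp_cancel X (Y.lift 0)
  have b2 : Proves T (Y.neg.imp ((X.or (Y.lift 0)).all.imp ((X.all).or Y))) :=
    imp_swap_hyp hstep (orI1 X.all Y)
  exact .mp (orE_rule b1 b2) hdec

theorem pull_r {T : Set Formula} {X Y : Formula} (hdec : Proves T (Y.or Y.neg)) :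
    Proves T (((Y.lift 0).or X).all.imp (Y.or (X.all))) := by
  have h0 : Proves T (((Y.lift 0).or X).all.imp ((X.or (Y.lift 0)).all)) :=
    all_mono (or_comm' _ _)
  exact imp_trans h0 (imp_trans (pull_l hdec) (or_comm' _ _))

end Aux

namespace Aux
open Formula

/-- Prenexation of disjunctions given decidability. -/
theorem prenexOr : ∀ (m : ℕ) (T : Set Formula),
    (∀ ρ : Formula, (IsSigma m ρ ∨ IsPi m ρ) → Proves T (ρ.or ρ.neg)) →
    (∀ A B, IsPi m A → IsSigma m B →
       ∃ C, IsPi (m+1) C ∧ Proves T (C.imp (A.or B)) ∧ Proves T ((A.or B).imp C)) ∧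
    (∀ A B, IsSigma m A → IsPi m B →
       ∃ C, IsSigma (m+1) C ∧ Proves T (C.imp (A.or B)) ∧ Proves T ((A.or B).imp C)) := by
  intro m
  induction m with
  | zero =>
      intro T hdec
      constructor
      · intro A B hA hB
        refine ⟨A.or B, (qf_sigma_pi (isQF_or (qf_of_pi0 hA) (qf_of_sigma0 hB)) 1).2,
          imp_refl _, imp_refl _⟩
      · intro A B hA hB
        refine ⟨A.or B, (qf_sigma_pi (isQF_or (qf_of_sigma0 hA) (qf_of_pi0 hB)) 1).1,
          imp_refl _, imp_refl _⟩
  | succ m ihm =>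
      intro T hdec
      have hdec' : ∀ ρ : Formula, (IsSigma m ρ ∨ IsPi m ρ) → Proves T (ρ.or ρ.neg) := by
        intro ρ hρ
        exact hdec ρ (hρ.elim (fun h => Or.inl (sigma_succ h)) (fun h => Or.inr (pi_succ h)))
      have ih := ihm T hdec'
      -- pulling existentials over a `Σ_m` disjunct
      have F0 : ∀ (u : ℕ) (B₀ : Formula), IsPi m B₀ → ∀ A, IsSigma m A →
          ∃ C, IsSigma (m+1) C ∧ Proves T (C.imp (A.or (exN B₀ u))) ∧
            Proves T ((A.or (exN B₀ u)).imp C) := by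
        intro u
        induction u with
        | zero => intro B₀ hB₀ A hA; exact ih.2 A B₀ hA hB₀
        | succ u ihu =>
            intro B₀ hB₀ A hA
            obtain ⟨C₀, hcls, h1, h2⟩ := ihu B₀ hB₀ (A.lift 0) (sigma_lift hA 0)
            refine ⟨C₀.ex, .ex hcls, ?_, ?_⟩
            · rw [exN_succ]
              exact imp_trans (ex_mono h1) (expull_l (exN B₀ u) A)
            · rw [exN_succ]
              refine orE_rule ?_ ?_
              · exact imp_trans (exvac A) (ex_mono (imp_trans (orI1 _ _) h2))
              · exact ex_mono (imp_trans (orI2 _ _) h2)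
      have FS : ∀ (s : ℕ) (A₀ : Formula), IsSigma m A₀ → ∀ B, IsSigma (m+1) B →
          ∃ C, IsPi (m+1+1) C ∧ Proves T (C.imp ((A₀.allN s).or B)) ∧
            Proves T (((A₀.allN s).or B).imp C) := by
        intro s
        induction s with
        | zero =>
            intro A₀ hA₀ B hB
            obtain ⟨u, B₀, hB₀, rfl⟩ := nf_sigma hB
            obtain ⟨C, hcls, h1, h2⟩ := F0 u B₀ hB₀ A₀ hA₀
            exact ⟨C, .ofSigma hcls, h1, h2⟩
        | succ s ihs =>
            intro A₀ hA₀ B hB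
            obtain ⟨C₀, hcls, h1, h2⟩ := ihs A₀ hA₀ (B.lift 0) (sigma_lift hB 0)
            refine ⟨C₀.all, .all hcls, ?_, ?_⟩
            · rw [allN_succ]
              exact imp_trans (all_mono h1) (pull_l (hdec B (Or.inl hB)))
            · rw [allN_succ]
              refine orE_rule ?_ ?_
              · exact all_mono (imp_trans (orI1 _ _) h2)
              · exact avac (imp_trans (orI2 _ _) h2)
      have G0 : ∀ (s : ℕ) (B₀ : Formula), IsSigma m B₀ → ∀ A, IsPi m A →
          ∃ C, IsPi (m+1) C ∧ Proves T (C.imp (A.or (B₀.allN s))) ∧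
            Proves T ((A.or (B₀.allN s)).imp C) := by
        intro s
        induction s with
        | zero => intro B₀ hB₀ A hA; exact ih.1 A B₀ hA hB₀
        | succ s ihs =>
            intro B₀ hB₀ A hA
            obtain ⟨C₀, hcls, h1, h2⟩ := ihs B₀ hB₀ (A.lift 0) (pi_lift hA 0)
            refine ⟨C₀.all, .all hcls, ?_, ?_⟩
            · rw [allN_succ]
              exact imp_trans (all_mono h1) (pull_r (hdec A (Or.inr (pi_succ hA))))
            · rw [allN_succ]
              refine orE_rule ?_ ?_
              · exact avac (imp_trans (orI1 _ _) h2)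
              · exact all_mono (imp_trans (orI2 _ _) h2)
      have GU : ∀ (u : ℕ) (A₀ : Formula), IsPi m A₀ → ∀ B, IsPi (m+1) B →
          ∃ C, IsSigma (m+1+1) C ∧ Proves T (C.imp ((exN A₀ u).or B)) ∧
            Proves T (((exN A₀ u).or B).imp C) := by
        intro u
        induction u with
        | zero =>
            intro A₀ hA₀ B hB
            obtain ⟨s, B₀, hB₀, rfl⟩ := nf_pi hB
            obtain ⟨C, hcls, h1, h2⟩ := G0 s B₀ hB₀ A₀ hA₀
            exact ⟨C, .ofPi hcls, h1, h2⟩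
        | succ u ihu =>
            intro A₀ hA₀ B hB
            obtain ⟨C₀, hcls, h1, h2⟩ := ihu A₀ hA₀ (B.lift 0) (pi_lift hB 0)
            refine ⟨C₀.ex, .ex hcls, ?_, ?_⟩
            · rw [exN_succ]
              exact imp_trans (ex_mono h1) (expull_r (exN A₀ u) B)
            · rw [exN_succ]
              refine orE_rule ?_ ?_
              · exact ex_mono (imp_trans (orI1 _ _) h2)
              · exact imp_trans (exvac B) (ex_mono (imp_trans (orI2 _ _) h2))
      constructor
      · intro A B hA hB
        obtain ⟨s, A₀, hA₀, rfl⟩ := nf_pi hA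
        exact FS s A₀ hA₀ B hB
      · intro A B hA hB
        obtain ⟨u, A₀, hA₀, rfl⟩ := nf_sigma hA
        exact GU u A₀ hA₀ B hB

end Aux

namespace Aux
open Formula

theorem nn_of {T : Set Formula} {X Y : Formula}
    (a : Proves T (X.neg.imp Y)) (b : Proves T (X.neg.imp Y.neg)) :
    Proves T (X.neg.neg) := by
  refine ng1 ?_
  have hS : Thms T ⊆ insert X.neg (Thms T) := Thms_subset_insert fun _ h => h
  exact NG.mp (.mp (.pv hS b) (.ax (Set.mem_insert _ _)))
    (.mp (.pv hS a) (.ax (Set.mem_insert _ _)))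

theorem hyp_or1 {T : Set Formula} (A H B : Formula) :
    Proves T (A.imp (H.imp (A.or B))) := by
  refine ng2 ?_
  exact NG.mp (.ha (.orI1 A B)) (.ax (Set.mem_insert_of_mem _ (Set.mem_insert _ _)))

theorem hyp_or2 {T : Set Formula} (B H A : Formula) :
    Proves T (B.imp (H.imp (A.or B))) := by
  refine ng2 ?_
  exact NG.mp (.ha (.orI2 A B)) (.ax (Set.mem_insert_of_mem _ (Set.mem_insert _ _)))

/-- from `C → D∨E` and `¬D` conclude `C → E`, packaged: `⊢ ¬D → (C → E)`. -/
theorem neg_select {T : Set Formula} {C D E : Formula}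
    (hC : Proves T (C.imp (D.or E))) : Proves T (D.neg.imp (C.imp E)) := by
  refine ng2 ?_
  have hS : Thms T ⊆ insert C (insert D.neg (Thms T)) :=
    Thms_subset_insert (Thms_subset_insert fun _ h => h)
  refine NG.mp (.mp (.pv hS (neg_imp_cancel E D))
      (.ax (Set.mem_insert_of_mem _ (Set.mem_insert _ _)))) ?_
  refine NG.mp (.pv hS (or_comm' D E)) ?_
  exact NG.mp (.pv hS hC) (.ax (Set.mem_insert _ _))

/-- Main lemma: closure under the `Σ_{k+1}` DNE rule yields `⊢ φ ∨ φ⊥` for level-`k` prenex `φ`. -/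
theorem main : ∀ (k : ℕ) (T : Set Formula),
    (∀ φ : Formula, IsSigma (k+1) φ → Proves T φ.neg.neg → Proves T φ) →
    ∀ φ : Formula, (IsSigma k φ ∨ IsPi k φ) → Proves T (φ.or φ.dual) := by
  intro k
  induction k with
  | zero =>
      intro T hdne φ hφ
      have hqf : φ.isQF := hφ.elim qf_of_sigma0 qf_of_pi0
      have hχ : IsSigma 1 (φ.or φ.neg) := (qf_sigma_pi (isQF_or hqf (isQF_neg hqf)) 1).1
      have h := hdne _ hχ (nneg_lem φ)
      rw [dual_qf hqf]
      exact h
  | succ m ihm =>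
      intro T hdne φ hφ
      have rule' : ∀ ψ : Formula, IsSigma (m+1) ψ → Proves T ψ.neg.neg → Proves T ψ :=
        fun ψ h => hdne ψ (sigma_succ h)
      have Hdec : ∀ ρ : Formula, (IsSigma m ρ ∨ IsPi m ρ) → Proves T (ρ.or ρ.dual) :=
        ihm T rule'
      have HdecN : ∀ ρ : Formula, (IsSigma m ρ ∨ IsPi m ρ) → Proves T (ρ.or ρ.neg) :=
        fun ρ h => .mp (or_mono (imp_refl ρ) (dual_imp_neg ρ)) (Hdec ρ h)
      have PO := prenexOr m T HdecN
      cases hφ with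
      | inl hσ =>
          obtain ⟨r, θ, hθ, rfl⟩ := nf_sigma hσ
          have hθx : IsPi m (shiftN r θ) := pi_shiftN hθ r
          have hθy : IsSigma m ((Formula.lift r)^[r] θ.dual) :=
            sigma_liftIter (dual_sigma hθ) r r
          obtain ⟨C, hCc, hC1, hC2⟩ := PO.1 _ _ hθx hθy
          have hχ : IsSigma (m+1+1) (exN (C.allN r) r) := exN_sigma (.ofPi (allN_pi hCc r)) r
          have hdecθ : Proves T (θ.or θ.dual) := Hdec θ (Or.inr hθ)
          have eΨ : shiftN r ((θ.dual).allN r) = ((Formula.lift r)^[r] θ.dual).allN r :=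
            shiftN_allN θ.dual r r
          -- (I)
          have hIa : Proves T ((exN θ r).imp (exN (C.allN r) r)) :=
            exN_mono (avacN r (imp_trans (orI1 _ _) hC2)) r
          have hIb : Proves T (((θ.dual).allN r).imp (exN (C.allN r) r)) := by
            have h1 := exvacN (T := T) r ((θ.dual).allN r)
            rw [eΨ] at h1
            exact imp_trans h1 (exN_mono (allN_mono (imp_trans (orI2 _ _) hC2) r) r)
          have hI : Proves T (((exN θ r).or ((θ.dual).allN r)).imp (exN (C.allN r) r)) :=
            orE_rule hIa hIb
          -- (III)
          have hb : Proves T (((exN θ r).neg).imp ((θ.dual).allN r)) :=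
            imp_trans (qNegExN r θ) (allN_mono (neg_or_elim hdecθ) r)
          have hIII : Proves T (((exN θ r).or ((θ.dual).allN r)).neg.neg) :=
            nn_of (imp_trans (contrapos (orI1 _ _)) hb) (contrapos (orI2 _ _))
          have hTχ : Proves T (exN (C.allN r) r) :=
            hdne _ hχ (.mp (dneg_mono hI) hIII)
          -- (II)
          have hP : Proves T ((shiftN r θ.neg).imp
              (C.imp ((Formula.lift r)^[r] θ.dual))) := by
            rw [shiftN_neg]
            exact neg_select hC1
          have hAI : Proves T (θ.neg.imp ((C.allN r).imp
              (((Formula.lift r)^[r] θ.dual).allN r))) := allimpN r hP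
          have hcore : Proves T ((C.allN r).imp
              (θ.or (((Formula.lift r)^[r] θ.dual).allN r))) := by
            refine .mp (orE_rule (hyp_or1 θ (C.allN r) _) ?_) hdecθ
            exact imp_swap_hyp (imp_trans (dual_imp_neg θ) hAI) (orI2 _ _)
          have hII : Proves T ((exN (C.allN r) r).imp ((exN θ r).or ((θ.dual).allN r))) := by
            have h1 : Proves T ((exN (C.allN r) r).imp
                (exN (θ.or (shiftN r ((θ.dual).allN r))) r)) := by
              refine exN_mono ?_ r
              rw [eΨ]
              exact hcore
            exact imp_trans h1 (exorv r θ ((θ.dual).allN r))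
          rw [dual_exN]
          exact .mp hII hTχ
      | inr hπ =>
          obtain ⟨r, θ, hθ, rfl⟩ := nf_pi hπ
          have hθx : IsSigma m ((Formula.lift r)^[r] θ) := sigma_liftIter hθ r r
          have hθy : IsPi m (shiftN r θ.dual) := pi_shiftN (dual_pi hθ) r
          obtain ⟨C, hCc, hC1, hC2⟩ := PO.1 _ _ hθy hθx
          have hχ : IsSigma (m+1+1) (exN (C.allN r) r) := exN_sigma (.ofPi (allN_pi hCc r)) r
          have hdecθ : Proves T (θ.or θ.dual) := Hdec θ (Or.inl hθ)
          have eφ : shiftN r (θ.allN r) = ((Formula.lift r)^[r] θ).allN r := shiftN_allN θ r r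
          -- (I)
          have hIb : Proves T ((exN θ.dual r).imp (exN (C.allN r) r)) :=
            exN_mono (avacN r (imp_trans (orI1 _ _) hC2)) r
          have hIa : Proves T ((θ.allN r).imp (exN (C.allN r) r)) := by
            have h1 := exvacN (T := T) r (θ.allN r)
            rw [eφ] at h1
            exact imp_trans h1 (exN_mono (allN_mono (imp_trans (orI2 _ _) hC2) r) r)
          have hI : Proves T (((θ.allN r).or (exN θ.dual r)).imp (exN (C.allN r) r)) :=
            orE_rule hIa hIb
          -- (III)
          have hb : Proves T (((exN θ.dual r).neg).imp (θ.allN r)) :=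
            imp_trans (qNegExN r θ.dual)
              (allN_mono (neg_or_elim (.mp (or_comm' _ _) hdecθ)) r)
          have hIII : Proves T (((θ.allN r).or (exN θ.dual r)).neg.neg) := by
            have a : Proves T ((((θ.allN r).or (exN θ.dual r)).neg).imp
                ((exN θ.dual r).neg)) := contrapos (orI2 _ _)
            have a' : Proves T ((((θ.allN r).or (exN θ.dual r)).neg).imp (θ.allN r)) :=
              imp_trans a hb
            exact nn_of a' (contrapos (orI1 _ _))
          have hTχ : Proves T (exN (C.allN r) r) :=
            hdne _ hχ (.mp (dneg_mono hI) hIII)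
          -- (II)
          have hP : Proves T ((shiftN r (θ.dual).neg).imp
              (C.imp ((Formula.lift r)^[r] θ))) := by
            rw [shiftN_neg]
            exact neg_select hC1
          have hAI : Proves T ((θ.dual).neg.imp ((C.allN r).imp
              (((Formula.lift r)^[r] θ).allN r))) := allimpN r hP
          have hcore : Proves T ((C.allN r).imp
              ((((Formula.lift r)^[r] θ).allN r).or θ.dual)) := by
            refine .mp (orE_rule ?_ (hyp_or2 θ.dual (C.allN r) _)) hdecθ
            exact imp_swap_hyp (imp_trans (imp_neg_dual θ) hAI) (orI1 _ _)
          have hII : Proves T ((exN (C.allN r) r).imp ((θ.allN r).or (exN θ.dual r))) := by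
            have h1 : Proves T ((exN (C.allN r) r).imp
                (exN ((θ.dual).or (shiftN r (θ.allN r))) r)) := by
              refine exN_mono ?_ r
              rw [eφ]
              exact imp_trans hcore (or_comm' _ _)
            exact imp_trans h1 (imp_trans (exorv r θ.dual (θ.allN r)) (or_comm' _ _))
          rw [dual_allN]
          exact .mp hII hTχ

end Aux
/-- if `T` (containing `HA`) is closed under `Σ_{k+1}-DNE-R`,
then `T ⊢ Σ_k-LEM`. -/
theorem sigLEM_of_dneRule (k : ℕ) (T : Set Formula)
    (hdne : ∀ φ : Formula, IsSigma (k + 1) φ → Proves T φ.neg.neg → Proves T φ) :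
    ∀ φ : Formula, IsSigma k φ → Proves T (φ.or φ.neg) := by
  intro φ hφ
  exact .mp (Aux.or_mono (Aux.imp_refl φ) (Aux.dual_imp_neg φ)) (Aux.main k T hdne φ (Or.inl hφ))

end SemiClassicalArith
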